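/- Let Q be a finite faithful quandle and let α be a minimal congruence of Q such that the group Dis_α is abelian. Then there is a prime p such that Dis_α is an elementary abelian p-group (abelian with every nonidentity element of order p), and every α-equivalence class has cardinality a power of p. -/

import Mathlib

/-- A quandle structure on `Q`, given by its left translations: each `L x` is a
permutation of `Q`, `x * x = x`, and `x * (y * z) = (x * y) * (x * z)`
(writing `x * y` for `L x y`). -/
structure QuandleStr (Q : Type*) where
  L : Q → Equiv.Perm Q
  idem : ∀ x : Q, L x x = x
  selfDistrib : ∀ x y z : Q, L x (L y z) = L (L x y) (L x z)

namespace QuandleStr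

variable {Q : Type*} (S : QuandleStr Q)

/-- The left multiplication group `LMlt(Q)`, generated by all left translations. -/
def Lmlt : Subgroup (Equiv.Perm Q) :=
  Subgroup.closure (Set.range S.L)

/-- The displacement group `Dis(Q)`, generated by all `L x * (L y)⁻¹`. -/
def Dis : Subgroup (Equiv.Perm Q) :=
  Subgroup.closure {g : Equiv.Perm Q | ∃ x y : Q, g = S.L x * (S.L y)⁻¹}

/-- A congruence of the quandle: an equivalence relation compatible with `*` and `\`. -/
def IsCong (θ : Setoid Q) : Prop :=
  ∀ x y u v : Q, θ.r x y → θ.r u v →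
    θ.r (S.L x u) (S.L y v) ∧ θ.r ((S.L x)⁻¹ u) ((S.L y)⁻¹ v)

/-- A quandle is faithful if `x ↦ L x` is injective. -/
def Faithful : Prop := Function.Injective S.L

/-- A quandle is connected if `LMlt(Q)` acts transitively. -/
def Connected : Prop := ∀ x y : Q, ∃ g ∈ S.Lmlt, g x = y

/-- A quandle is latin if all right translations are bijective. -/
def Latin : Prop := ∀ y : Q, Function.Bijective fun x : Q => S.L x y

/-- `θ` is a minimal congruence: not equality, and the only congruence strictly
contained in it is equality. -/
def IsMinCong (θ : Setoid Q) : Prop :=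
  S.IsCong θ ∧ θ ≠ ⊥ ∧ ∀ β : Setoid Q, S.IsCong β → β < θ → β = ⊥

/-- `θ` is a maximal congruence: not the all relation, and the only congruence strictly
containing it is the all relation. -/
def IsMaxCong (θ : Setoid Q) : Prop :=
  S.IsCong θ ∧ θ ≠ ⊤ ∧ ∀ β : Setoid Q, S.IsCong β → θ < β → β = ⊤

/-- `Dis_α`: the subgroup generated by the `L x * (L y)⁻¹` with `x α y`. -/
def DisC (r : Q → Q → Prop) : Subgroup (Equiv.Perm Q) :=
  Subgroup.closure {g : Equiv.Perm Q | ∃ x y : Q, r x y ∧ g = S.L x * (S.L y)⁻¹}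

/-- `Dis^α`: the elements of `Dis(Q)` displacing every point inside its `α`-class. -/
def DisUp (θ : Setoid Q) : Subgroup (Equiv.Perm Q) where
  carrier := {g : Equiv.Perm Q | g ∈ S.Dis ∧ ∀ x : Q, θ.r (g x) x}
  one_mem' := ⟨S.Dis.one_mem, fun x => θ.iseqv.refl x⟩
  mul_mem' := by
    rintro a b ⟨ha, ha2⟩ ⟨hb, hb2⟩
    refine ⟨S.Dis.mul_mem ha hb, fun x => ?_⟩
    rw [Equiv.Perm.mul_apply]
    exact θ.iseqv.trans (ha2 (b x)) (hb2 x)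
  inv_mem' := by
    rintro a ⟨ha, ha2⟩
    refine ⟨S.Dis.inv_mem ha, fun x => ?_⟩
    have h := ha2 (a⁻¹ x)
    rw [← Equiv.Perm.mul_apply, mul_inv_cancel, Equiv.Perm.one_apply] at h
    exact θ.iseqv.symm h

end QuandleStr

/-- The orbit equivalence relation of a subgroup of permutations. -/
def orbSetoid {Q : Type*} (N : Subgroup (Equiv.Perm Q)) : Setoid Q where
  r x y := ∃ n ∈ N, n x = y
  iseqv := by
    refine ⟨fun x => ⟨1, N.one_mem, rfl⟩, ?_, ?_⟩
    · rintro x y ⟨n, hn, rfl⟩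
      exact ⟨n⁻¹, N.inv_mem hn, by rw [← Equiv.Perm.mul_apply, inv_mul_cancel, Equiv.Perm.one_apply]⟩
    · rintro x y z ⟨n, hn, rfl⟩ ⟨m, hm, rfl⟩
      exact ⟨m * n, N.mul_mem hm hn, Equiv.Perm.mul_apply m n x⟩

theorem Equiv.Perm.apply_inv_self {β : Type*} (f : Equiv.Perm β) (x : β) : f (f⁻¹ x) = x := by
  simp only [Equiv.Perm.coe_inv, Equiv.apply_symm_apply]

theorem Equiv.Perm.inv_apply_self {β : Type*} (f : Equiv.Perm β) (x : β) : f⁻¹ (f x) = x := by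
  simp only [Equiv.Perm.coe_inv, Equiv.symm_apply_apply]

namespace QuandleStr

variable {Q : Type*} (S : QuandleStr Q)

lemma L_conj (x y : Q) : S.L x * S.L y * (S.L x)⁻¹ = S.L (S.L x y) := by
  ext z
  simp only [Equiv.Perm.mul_apply]
  have := S.selfDistrib x y ((S.L x)⁻¹ z)
  rwa [Equiv.Perm.apply_inv_self] at this

lemma L_conj' (x y : Q) : (S.L x)⁻¹ * S.L y * S.L x = S.L ((S.L x)⁻¹ y) := by
  have h := S.L_conj x ((S.L x)⁻¹ y)
  rw [Equiv.Perm.apply_inv_self] at h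
  rw [← h]
  group

lemma lmlt_conj {g : Equiv.Perm Q} (hg : g ∈ S.Lmlt) (y : Q) :
    g * S.L y * g⁻¹ = S.L (g y) := by
  induction hg using Subgroup.closure_induction generalizing y with
  | mem x hx => obtain ⟨z, rfl⟩ := hx; exact S.L_conj z y
  | one => simp
  | mul a b ha hb pa pb =>
      have : a * b * S.L y * (a * b)⁻¹ = a * (b * S.L y * b⁻¹) * a⁻¹ := by group
      rw [this, pb, pa]
      simp
  | inv a ha pa =>
      have h := pa (a⁻¹ y)
      rw [Equiv.Perm.apply_inv_self] at h
      rw [← h]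
      group

lemma disC_le_lmlt (r : Q → Q → Prop) : S.DisC r ≤ S.Lmlt := by
  apply Subgroup.closure_le _ |>.mpr
  rintro g ⟨x, y, hxy, rfl⟩
  exact mul_mem (Subgroup.subset_closure ⟨x, rfl⟩)
    (inv_mem (Subgroup.subset_closure ⟨y, rfl⟩))

variable {α : Setoid Q}

lemma disC_rel (hcong : S.IsCong α) {g : Equiv.Perm Q} (hg : g ∈ S.DisC α.r) (u : Q) :
    α.r (g u) u := by
  induction hg using Subgroup.closure_induction generalizing u with
  | mem x hx =>
      obtain ⟨a, b, hab, rfl⟩ := hx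
      have h := (hcong a b ((S.L b)⁻¹ u) ((S.L b)⁻¹ u) hab (α.iseqv.refl _)).1
      rw [Equiv.Perm.apply_inv_self] at h
      simpa using h
  | one => exact α.iseqv.refl u
  | mul a b ha hb pa pb =>
      have : (a * b) u = a (b u) := rfl
      rw [this]
      exact α.iseqv.trans (pa (b u)) (pb u)
  | inv a ha pa =>
      have h := pa (a⁻¹ u)
      rw [Equiv.Perm.apply_inv_self] at h
      exact α.iseqv.symm h

lemma conj_mem_disC (h : Equiv.Perm Q)
    (hgen : ∀ x y : Q, α.r x y → h * (S.L x * (S.L y)⁻¹) * h⁻¹ ∈ S.DisC α.r)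
    {g : Equiv.Perm Q} (hg : g ∈ S.DisC α.r) : h * g * h⁻¹ ∈ S.DisC α.r := by
  induction hg using Subgroup.closure_induction with
  | mem x hx => obtain ⟨a, b, hab, rfl⟩ := hx; exact hgen a b hab
  | one => simpa using one_mem _
  | mul a b ha hb pa pb =>
      have : h * (a * b) * h⁻¹ = (h * a * h⁻¹) * (h * b * h⁻¹) := by group
      rw [this]; exact mul_mem pa pb
  | inv a ha pa =>
      have : h * a⁻¹ * h⁻¹ = (h * a * h⁻¹)⁻¹ := by group
      rw [this]; exact inv_mem pa

lemma L_conj_disC (hcong : S.IsCong α) (z : Q) {g : Equiv.Perm Q}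
    (hg : g ∈ S.DisC α.r) : S.L z * g * (S.L z)⁻¹ ∈ S.DisC α.r := by
  refine S.conj_mem_disC _ (fun x y hxy => ?_) hg
  have : S.L z * (S.L x * (S.L y)⁻¹) * (S.L z)⁻¹
      = S.L (S.L z x) * (S.L (S.L z y))⁻¹ := by
    rw [← S.L_conj z x, ← S.L_conj z y]; group
  rw [this]
  exact Subgroup.subset_closure
    ⟨S.L z x, S.L z y, (hcong z z x y (α.iseqv.refl z) hxy).1, rfl⟩

lemma Linv_conj_disC (hcong : S.IsCong α) (z : Q) {g : Equiv.Perm Q}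
    (hg : g ∈ S.DisC α.r) : (S.L z)⁻¹ * g * S.L z ∈ S.DisC α.r := by
  have := S.conj_mem_disC (S.L z)⁻¹ (fun x y hxy => ?_) hg
  · simpa using this
  have : (S.L z)⁻¹ * (S.L x * (S.L y)⁻¹) * ((S.L z)⁻¹)⁻¹
      = S.L ((S.L z)⁻¹ x) * (S.L ((S.L z)⁻¹ y))⁻¹ := by
    rw [← S.L_conj' z x, ← S.L_conj' z y]; group
  rw [this]
  exact Subgroup.subset_closure
    ⟨(S.L z)⁻¹ x, (S.L z)⁻¹ y, (hcong z z x y (α.iseqv.refl z) hxy).2, rfl⟩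

end QuandleStr

lemma orb_cong {Q : Type*} (S : QuandleStr Q) {α : Setoid Q} (hcong : S.IsCong α)
    (M : Subgroup (Equiv.Perm Q)) (hM1 : M ≤ S.DisC α.r)
    (hconj : ∀ z : Q, ∀ g ∈ M, S.L z * g * (S.L z)⁻¹ ∈ M)
    (hconj' : ∀ z : Q, ∀ g ∈ M, (S.L z)⁻¹ * g * S.L z ∈ M) :
    S.IsCong (orbSetoid M) := by
  rintro x y u v ⟨n, hn, rfl⟩ ⟨m, hm, rfl⟩
  have hnl : n ∈ S.Lmlt := S.disC_le_lmlt _ (hM1 hn)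
  have hc := S.lmlt_conj hnl x
  constructor
  · refine ⟨n * (S.L x * (n⁻¹ * m) * (S.L x)⁻¹),
      M.mul_mem hn (hconj x _ (M.mul_mem (M.inv_mem hn) hm)), ?_⟩
    rw [← hc]
    simp [Equiv.Perm.mul_apply]
  · refine ⟨n * ((S.L x)⁻¹ * (n⁻¹ * m) * S.L x),
      M.mul_mem hn (hconj' x _ (M.mul_mem (M.inv_mem hn) hm)), ?_⟩
    rw [← hc]
    simp [Equiv.Perm.mul_apply, mul_inv_rev]


lemma conjPowAux {G : Type*} [Group G] (a g : G) (n : ℕ) :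
    (a * g * a⁻¹) ^ n = a * g ^ n * a⁻¹ := by
  induction n with
  | zero => group
  | succ m ih => rw [pow_succ, pow_succ, ih]; group

theorem stmt8 {Q : Type*} [Finite Q] (S : QuandleStr Q) (hfaith : S.Faithful)
    (α : Setoid Q) (hmin : S.IsMinCong α)
    (habel : ∀ a b : ↥(S.DisC α.r), a * b = b * a) :
    ∃ p : ℕ, p.Prime ∧
      (∀ g ∈ S.DisC α.r, ∀ h ∈ S.DisC α.r, g * h = h * g) ∧
      (∀ g ∈ S.DisC α.r, g ≠ 1 → orderOf g = p) ∧
      (∀ x : Q, ∃ m : ℕ, Nat.card {y : Q // α.r x y} = p ^ m) := by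
  obtain ⟨hcong, hne, hminimal⟩ := hmin
  have hcomm : ∀ g ∈ S.DisC α.r, ∀ h ∈ S.DisC α.r, g * h = h * g := by
    intro g hg h hh
    exact Subtype.ext_iff.mp (habel ⟨g, hg⟩ ⟨h, hh⟩)
  -- a nontrivial related pair
  have hxy : ∃ x y : Q, α.r x y ∧ x ≠ y := by
    by_contra hc
    push_neg at hc
    apply hne
    apply Setoid.ext
    intro a b
    rw [Setoid.bot_def]
    exact ⟨fun h => hc a b h, fun h => h ▸ α.iseqv.refl a⟩
  obtain ⟨x₀, y₀, hx₀y₀, hne₀⟩ := hxy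
  -- a nontrivial element of Dis_α
  have hg₀mem : S.L x₀ * (S.L y₀)⁻¹ ∈ S.DisC α.r :=
    Subgroup.subset_closure ⟨x₀, y₀, hx₀y₀, rfl⟩
  have hg₀ne : S.L x₀ * (S.L y₀)⁻¹ ≠ 1 := by
    intro h
    exact hne₀ (hfaith (mul_inv_eq_one.mp h))
  set g₀ := S.L x₀ * (S.L y₀)⁻¹ with hg₀
  -- find a prime p and an element of order p
  have hord : orderOf g₀ ≠ 1 := fun h => hg₀ne (orderOf_eq_one_iff.mp h)
  obtain ⟨p, hp, hpdvd⟩ := Nat.exists_prime_and_dvd hord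
  haveI := Fact.mk hp
  have hordpos : 0 < orderOf g₀ := orderOf_pos g₀
  set h₀ := g₀ ^ (orderOf g₀ / p) with hh₀
  have hh₀p : h₀ ^ p = 1 := by
    rw [hh₀, ← pow_mul, Nat.div_mul_cancel hpdvd, pow_orderOf_eq_one]
  have hh₀ne : h₀ ≠ 1 := by
    intro h
    have hdvd : orderOf g₀ ∣ orderOf g₀ / p := orderOf_dvd_of_pow_eq_one h
    have hlt : orderOf g₀ / p < orderOf g₀ :=
      Nat.div_lt_self hordpos hp.one_lt
    have h' := Nat.eq_zero_of_dvd_of_lt hdvd hlt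
    have h'' : 0 < orderOf g₀ / p := Nat.div_pos (Nat.le_of_dvd hordpos hpdvd) hp.pos
    omega
  -- the p-torsion subgroup of Dis_α
  have hh₀mem : h₀ ∈ S.DisC α.r := pow_mem hg₀mem _
  let M : Subgroup (Equiv.Perm Q) :=
    { carrier := {g | g ∈ S.DisC α.r ∧ g ^ p = 1}
      one_mem' := ⟨one_mem _, one_pow p⟩
      mul_mem' := by
        rintro a b ⟨ha, ha2⟩ ⟨hb, hb2⟩
        refine ⟨mul_mem ha hb, ?_⟩
        have hco : Commute a b := hcomm a ha b hb
        rw [hco.mul_pow, ha2, hb2, one_mul]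
      inv_mem' := by
        rintro a ⟨ha, ha2⟩
        exact ⟨inv_mem ha, by rw [inv_pow, ha2, inv_one]⟩ }
  have hMmem : ∀ g : Equiv.Perm Q, g ∈ M ↔ g ∈ S.DisC α.r ∧ g ^ p = 1 :=
    fun g => Iff.rfl
  have hM1 : M ≤ S.DisC α.r := fun g hg => ((hMmem g).mp hg).1
  have hconj : ∀ z : Q, ∀ g ∈ M, S.L z * g * (S.L z)⁻¹ ∈ M := by
    intro z g hg
    obtain ⟨hg1, hg2⟩ := (hMmem g).mp hg
    refine (hMmem _).mpr ⟨S.L_conj_disC hcong z hg1, ?_⟩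
    rw [conjPowAux, hg2]; group
  have hconj' : ∀ z : Q, ∀ g ∈ M, (S.L z)⁻¹ * g * S.L z ∈ M := by
    intro z g hg
    obtain ⟨hg1, hg2⟩ := (hMmem g).mp hg
    refine (hMmem _).mpr ⟨S.Linv_conj_disC hcong z hg1, ?_⟩
    have h2 := conjPowAux (S.L z)⁻¹ g p
    rw [inv_inv] at h2
    rw [h2, hg2]; group
  -- the orbit setoid of M equals α
  have hcongM : S.IsCong (orbSetoid M) := orb_cong S hcong M hM1 hconj hconj'
  have hle : orbSetoid M ≤ α := by
    rintro a b ⟨n, hn, rfl⟩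
    exact α.iseqv.symm (S.disC_rel hcong (hM1 hn) a)
  have hMne : orbSetoid M ≠ ⊥ := by
    intro h
    obtain ⟨u, hu⟩ : ∃ u : Q, h₀ u ≠ u := by
      by_contra hc
      push_neg at hc
      exact hh₀ne (Equiv.ext hc)
    have : (orbSetoid M).r u (h₀ u) := ⟨h₀, (hMmem _).mpr ⟨hh₀mem, hh₀p⟩, rfl⟩
    rw [h, Setoid.bot_def] at this
    exact hu this.symm
  have hθα : orbSetoid M = α := by
    rcases lt_or_eq_of_le hle with hlt | heq
    · exact absurd (hminimal _ hcongM hlt) hMne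
    · exact heq
  have htrans : ∀ a b : Q, α.r a b → ∃ n ∈ M, n a = b := by
    intro a b hab
    rw [← hθα] at hab
    exact hab
  -- every element of Dis_α has exponent p
  have hfix : ∀ (k : Equiv.Perm Q) (u : Q), k u = u → ∀ m : ℕ, (k ^ m) u = u := by
    intro k u hk m
    induction m with
    | zero => rfl
    | succ n ih => rw [pow_succ, Equiv.Perm.mul_apply, hk, ih]
  have hexp : ∀ g ∈ S.DisC α.r, g ^ p = 1 := by
    intro g hg
    apply Equiv.ext
    intro u
    show (g ^ p) u = u
    obtain ⟨n, hn, hnu⟩ := htrans u (g u) (α.iseqv.symm (S.disC_rel hcong hg u))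
    obtain ⟨hn1, hn2⟩ := (hMmem n).mp hn
    have hk1 : n⁻¹ * g ∈ S.DisC α.r := mul_mem (inv_mem hn1) hg
    have hku : (n⁻¹ * g) u = u := by
      rw [Equiv.Perm.mul_apply, ← hnu, Equiv.Perm.inv_apply_self]
    have hgeq : g = n * (n⁻¹ * g) := by group
    have hcnk : Commute n (n⁻¹ * g) := hcomm n hn1 _ hk1
    rw [hgeq, hcnk.mul_pow, hn2, one_mul]
    exact hfix _ _ hku p
  refine ⟨p, hp, hcomm, fun g hg hgne => orderOf_eq_prime (hexp g hg) hgne, ?_⟩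
  -- cardinality of classes
  intro x
  haveI : Finite ↥M := Subtype.finite
  have hMp : IsPGroup p ↥M := by
    intro g
    refine ⟨1, ?_⟩
    apply Subtype.ext
    rw [pow_one]
    push_cast
    exact ((hMmem _).mp g.2).2
  obtain ⟨n, hcard⟩ := (IsPGroup.iff_card).mp hMp
  have horbit : Nat.card {y : Q // α.r x y} = Nat.card (MulAction.orbit M x) := by
    apply Nat.card_congr
    apply Equiv.subtypeEquivRight
    intro y
    constructor
    · intro hy
      obtain ⟨m, hm, hmx⟩ := htrans x y hy
      exact ⟨⟨m, hm⟩, hmx⟩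
    · rintro ⟨⟨m, hm⟩, rfl⟩
      rw [← hθα]
      exact ⟨m, hm, rfl⟩
  have hdvd2 : Nat.card (MulAction.orbit M x) ∣ Nat.card ↥M := by
    rw [Nat.card_congr (MulAction.orbitEquivQuotientStabilizer M x)]
    exact Subgroup.card_quotient_dvd_card _
  rw [horbit] at *
  obtain ⟨m, _, hm⟩ := (Nat.dvd_prime_pow hp).mp (hcard ▸ hdvd2)
  exact ⟨m, hm⟩
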